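/- arXiv:1807.00935 — 2 statements merged into one kernel-verified Lean document; each statement's English description precedes it below -/
import Mathlib

section
/- The function R₂ˢ(φ₂) = log₂(1 + φ₂·a) - log₂(1 + φ₂·b/(1 + (1-φ₂)·b)) with a = ρ₂|h₂|² > 0 and b = ρ_e ln(1/ε) > 0 is strictly concave on (0,1): its second derivative equals (1/ln 2)·(−a²/(1+φ₂a)² − b²/(1+(1-φ₂)b)²) < 0. -/
/-- The asymptotic secrecy rate R₂ˢ(φ₂) is strictly concave on (0,1), with second
derivative (1/ln2)(−a²/(1+φ₂a)² − b²/(1+(1−φ₂)b)²) < 0. -/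
theorem stmt10 (a b : ℝ) (ha : 0 < a) (hb : 0 < b) :
    StrictConcaveOn ℝ (Set.Ioo 0 1)
      (fun x : ℝ => Real.logb 2 (1 + x * a)
        - Real.logb 2 (1 + x * b / (1 + (1 - x) * b))) ∧
    ∀ x ∈ Set.Ioo (0:ℝ) 1,
      deriv (deriv (fun x : ℝ => Real.logb 2 (1 + x * a)
          - Real.logb 2 (1 + x * b / (1 + (1 - x) * b)))) x
        = (1 / Real.log 2) * (-(a ^ 2) / (1 + x * a) ^ 2
            - b ^ 2 / (1 + (1 - x) * b) ^ 2) ∧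
      deriv (deriv (fun x : ℝ => Real.logb 2 (1 + x * a)
          - Real.logb 2 (1 + x * b / (1 + (1 - x) * b)))) x < 0 := by
  have hl2 : (0:ℝ) < Real.log 2 := Real.log_pos (by norm_num)
  set f : ℝ → ℝ := fun x => Real.logb 2 (1 + x * a)
      - Real.logb 2 (1 + x * b / (1 + (1 - x) * b)) with hfdef
  set g : ℝ → ℝ := fun x =>
      (Real.log (1 + x * a) + Real.log (1 + (1 - x) * b) - Real.log (1 + b)) / Real.log 2 with hgdef
  set g1 : ℝ → ℝ := fun x => (a / (1 + x * a) - b / (1 + (1 - x) * b)) / Real.log 2 with hg1def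
  set g2 : ℝ → ℝ := fun x =>
      (-(a ^ 2) / (1 + x * a) ^ 2 - b ^ 2 / (1 + (1 - x) * b) ^ 2) / Real.log 2 with hg2def
  have h1 : ∀ x ∈ Set.Ioo (0:ℝ) 1, 0 < 1 + x * a := by
    intro x hx; nlinarith [hx.1, hx.2]
  have h2 : ∀ x ∈ Set.Ioo (0:ℝ) 1, 0 < 1 + (1 - x) * b := by
    intro x hx; nlinarith [hx.1, hx.2]
  have hEq : Set.EqOn f g (Set.Ioo 0 1) := by
    intro x hx
    have hu := h1 x hx
    have hv := h2 x hx
    have key : 1 + x * b / (1 + (1 - x) * b) = (1 + b) / (1 + (1 - x) * b) := by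
      rw [eq_div_iff (ne_of_gt hv), add_mul, div_mul_cancel₀ _ (ne_of_gt hv)]; ring
    simp only [hfdef, hgdef, Real.logb, key]
    rw [Real.log_div (by positivity) (ne_of_gt hv)]
    ring
  -- derivative building blocks
  have hu' : ∀ x : ℝ, HasDerivAt (fun x : ℝ => 1 + x * a) a x := by
    intro x
    simpa using ((hasDerivAt_id x).mul_const a).const_add 1
  have hv' : ∀ x : ℝ, HasDerivAt (fun x : ℝ => 1 + (1 - x) * b) (-b) x := by
    intro x
    simpa using (((hasDerivAt_const x (1:ℝ)).sub (hasDerivAt_id x)).mul_const b).const_add 1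
  have hgd : ∀ x ∈ Set.Ioo (0:ℝ) 1, HasDerivAt g (g1 x) x := by
    intro x hx
    have hu := h1 x hx
    have hv := h2 x hx
    have A : HasDerivAt (fun x : ℝ => Real.log (1 + x * a)) (a / (1 + x * a)) x :=
      (hu' x).log (ne_of_gt hu)
    have B : HasDerivAt (fun x : ℝ => Real.log (1 + (1 - x) * b)) (-b / (1 + (1 - x) * b)) x :=
      (hv' x).log (ne_of_gt hv)
    have := ((A.add B).sub_const (Real.log (1 + b))).div_const (Real.log 2)
    refine this.congr_deriv ?_
    show _ = (a / (1 + x * a) - b / (1 + (1 - x) * b)) / Real.log 2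
    ring
  have hg1d : ∀ x ∈ Set.Ioo (0:ℝ) 1, HasDerivAt g1 (g2 x) x := by
    intro x hx
    have hu := h1 x hx
    have hv := h2 x hx
    have A : HasDerivAt (fun x : ℝ => a / (1 + x * a))
        ((0 * (1 + x * a) - a * a) / (1 + x * a) ^ 2) x :=
      (hasDerivAt_const x a).div (hu' x) (ne_of_gt hu)
    have B : HasDerivAt (fun x : ℝ => b / (1 + (1 - x) * b))
        ((0 * (1 + (1 - x) * b) - b * (-b)) / (1 + (1 - x) * b) ^ 2) x :=
      (hasDerivAt_const x b).div (hv' x) (ne_of_gt hv)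
    have := (A.sub B).div_const (Real.log 2)
    refine this.congr_deriv ?_
    show _ = (-(a ^ 2) / (1 + x * a) ^ 2 - b ^ 2 / (1 + (1 - x) * b) ^ 2) / Real.log 2
    ring
  have hdf : ∀ x ∈ Set.Ioo (0:ℝ) 1, deriv f x = g1 x := by
    intro x hx
    have hev : f =ᶠ[nhds x] g := Filter.eventuallyEq_of_mem (isOpen_Ioo.mem_nhds hx) hEq
    rw [hev.deriv_eq, (hgd x hx).deriv]
  have hddf : ∀ x ∈ Set.Ioo (0:ℝ) 1, deriv (deriv f) x = g2 x := by
    intro x hx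
    have hev : deriv f =ᶠ[nhds x] g1 := Filter.eventuallyEq_of_mem (isOpen_Ioo.mem_nhds hx) hdf
    rw [hev.deriv_eq, (hg1d x hx).deriv]
  have hneg : ∀ x ∈ Set.Ioo (0:ℝ) 1, g2 x < 0 := by
    intro x hx
    have hu := h1 x hx
    have hv := h2 x hx
    have h1' : 0 < a ^ 2 / (1 + x * a) ^ 2 := by positivity
    have h2' : 0 < b ^ 2 / (1 + (1 - x) * b) ^ 2 := by positivity
    have : -(a ^ 2) / (1 + x * a) ^ 2 - b ^ 2 / (1 + (1 - x) * b) ^ 2 < 0 := by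
      have : -(a ^ 2) / (1 + x * a) ^ 2 = -(a ^ 2 / (1 + x * a) ^ 2) := by ring
      rw [this]; linarith
    exact div_neg_of_neg_of_pos this hl2
  constructor
  · apply strictConcaveOn_of_deriv2_neg (convex_Ioo 0 1)
    · have hgc : ContinuousOn g (Set.Ioo 0 1) := fun x hx =>
        ((hgd x hx).differentiableAt.continuousAt).continuousWithinAt
      exact hgc.congr hEq
    · intro x hx
      rw [interior_Ioo] at hx
      have : deriv^[2] f x = deriv (deriv f) x := by
        simp [Function.iterate_succ, Function.iterate_zero]
      rw [this, hddf x hx]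
      exact hneg x hx
  · intro x hx
    refine ⟨?_, ?_⟩
    · rw [hddf x hx, hg2def]
      ring
    · rw [hddf x hx]
      exact hneg x hx
end

section
/- With a = ρ₂|h₂|² and b = ρ_e ln(1/ε) both positive, if a > b/(1+b) then the strictly concave function R₂ˢ(φ₂) = log₂(1 + φ₂a) - log₂(1 + φ₂b/(1+(1-φ₂)b)) is positive at its maximizer φ₂* = 1/2 + 1/(2b) - 1/(2a), and moreover R₂ˢ(φ₂) > 0 for all sufficiently small φ₂ > 0. -/
lemma key12 (a b x : ℝ) (ha : 0 < a) (hb : 0 < b) (hx : 0 < x)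
    (hd : 0 < 1 + (1 - x) * b) (hlt : b < a * (1 + (1 - x) * b)) :
    0 < Real.logb 2 (1 + x * a) - Real.logb 2 (1 + x * b / (1 + (1 - x) * b)) := by
  have ht : 0 ≤ x * b / (1 + (1 - x) * b) := by positivity
  have hlt2 : x * b / (1 + (1 - x) * b) < x * a := by
    rw [div_lt_iff₀ hd]
    nlinarith
  have h0 : (0:ℝ) < 1 + x * b / (1 + (1 - x) * b) := by linarith
  have h2 : 1 + x * b / (1 + (1 - x) * b) < 1 + x * a := by linarith
  have := Real.logb_lt_logb (by norm_num : (1:ℝ) < 2) h0 h2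
  linarith

/-- If a > b/(1+b) then the asymptotic secrecy rate is positive at its maximizer
φ₂* = 1/2 + 1/(2b) − 1/(2a), and positive for all sufficiently small φ₂ > 0. -/
theorem stmt12 (a b : ℝ) (ha : 0 < a) (hb : 0 < b) (hfeas : b / (1 + b) < a) :
    (0 < Real.logb 2 (1 + (1 / 2 + 1 / (2 * b) - 1 / (2 * a)) * a)
        - Real.logb 2 (1 + (1 / 2 + 1 / (2 * b) - 1 / (2 * a)) * b
            / (1 + (1 - (1 / 2 + 1 / (2 * b) - 1 / (2 * a))) * b))) ∧
    ∃ δ > (0:ℝ), ∀ x : ℝ, 0 < x → x < δ →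
      0 < Real.logb 2 (1 + x * a)
          - Real.logb 2 (1 + x * b / (1 + (1 - x) * b)) := by
  have h1 : b < a * (1 + b) := by
    rw [div_lt_iff₀ (by linarith)] at hfeas; linarith
  constructor
  · set φ : ℝ := 1 / 2 + 1 / (2 * b) - 1 / (2 * a) with hφ
    have hφeq : φ = (a * b + a - b) / (2 * a * b) := by
      field_simp [hφ]; rw [hφ]; field_simp
    have hφpos : 0 < φ := by
      rw [hφeq]
      apply div_pos (by nlinarith) (by positivity)
    have hdeq : 1 + (1 - φ) * b = (a + a * b + b) / (2 * a) := by
      rw [hφeq]; field_simp; ring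
    apply key12 a b φ ha hb hφpos
    · rw [hdeq]; positivity
    · rw [hdeq]
      have : a * ((a + a * b + b) / (2 * a)) = (a + a * b + b) / 2 := by
        field_simp
      rw [this]; rw [lt_div_iff₀ (by norm_num : (0:ℝ) < 2)]; nlinarith
  · refine ⟨min 1 ((a * (1 + b) - b) / (a * b)), lt_min one_pos (div_pos (by nlinarith) (by positivity)), ?_⟩
    intro x hx hxδ
    have hx1 : x < 1 := lt_of_lt_of_le hxδ (min_le_left _ _)
    have hx2 : x < (a * (1 + b) - b) / (a * b) := lt_of_lt_of_le hxδ (min_le_right _ _)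
    apply key12 a b x ha hb hx
    · nlinarith
    · rw [lt_div_iff₀ (by positivity)] at hx2
      nlinarith
end
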